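/- arXiv:1403.4718 — 3 statements merged into one kernel-verified Lean document; each statement's English description precedes it below -/
import Mathlib

section
/- Let ω be a state on ℓ∞, extended to nonnegative unbounded sequences by ω̄(x) = sup { ω(y) : y ∈ ℓ∞, 0 ≤ y ≤ x }. Let z ∈ ℓ∞ be a nonnegative sequence with ω(z) = 0, and let u be a nonnegative (possibly unbounded) sequence with ω̄(u) < ∞. Then ω̄(uz) = 0, where uz is the pointwise product. -/
open Filter
open scoped ENNReal

/-- A sequence `x : ℕ → ℝ` is bounded (an element of `ℓ∞`). -/
def Bdd (x : ℕ → ℝ) : Prop := ∃ C, ∀ n, |x n| ≤ C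

/-- A state on `ℓ∞`: a positive linear functional `ω` with `ω(1) = 1`.
We model it as a function on all sequences whose linearity and positivity
are only required on bounded sequences. -/
structure LinfState where
  toFun : (ℕ → ℝ) → ℝ
  map_add' : ∀ x y, Bdd x → Bdd y → toFun (x + y) = toFun x + toFun y
  map_smul' : ∀ (c : ℝ) (x), Bdd x → toFun (c • x) = c * toFun x
  pos' : ∀ x, Bdd x → (∀ n, 0 ≤ x n) → 0 ≤ toFun x
  map_one' : toFun (fun _ => (1 : ℝ)) = 1

/-- The extension `ω̄` of a state `ω` to arbitrary nonnegative (possibly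
unbounded) sequences, with values in `[0,∞]`:
`ω̄(x) = sup { ω(y) : y ∈ ℓ∞, 0 ≤ y ≤ x }`. -/
noncomputable def LinfState.ext (S : LinfState) (x : ℕ → ℝ) : ℝ≥0∞ :=
  ⨆ y ∈ {y : ℕ → ℝ | Bdd y ∧ (∀ n, 0 ≤ y n) ∧ ∀ n, y n ≤ x n},
    ENNReal.ofReal (S.toFun y)

lemma bdd_of_bounds {f : ℕ → ℝ} {K : ℝ} (h0 : ∀ n, 0 ≤ f n) (hK : ∀ n, f n ≤ K) :
    Bdd f :=
  ⟨K, fun n => abs_le.2 ⟨le_trans (neg_nonpos.2 (le_trans (h0 0) (hK 0))) (h0 n), hK n⟩⟩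

lemma bdd_sub {x y : ℕ → ℝ} (hx : Bdd x) (hy : Bdd y) : Bdd (x - y) := by
  obtain ⟨C, hC⟩ := hx; obtain ⟨D, hD⟩ := hy
  exact ⟨C + D, fun n => by
    have := abs_sub (x n) (y n)
    calc |x n - y n| ≤ |x n| + |y n| := abs_sub _ _
    _ ≤ C + D := add_le_add (hC n) (hD n)⟩

lemma bdd_smul {x : ℕ → ℝ} (c : ℝ) (hx : Bdd x) : Bdd (c • x) := by
  obtain ⟨C, hC⟩ := hx
  exact ⟨|c| * C, fun n => by
    simp only [Pi.smul_apply, smul_eq_mul, abs_mul]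
    exact mul_le_mul_of_nonneg_left (hC n) (abs_nonneg c)⟩

lemma bdd_add {x y : ℕ → ℝ} (hx : Bdd x) (hy : Bdd y) : Bdd (x + y) := by
  obtain ⟨C, hC⟩ := hx; obtain ⟨D, hD⟩ := hy
  exact ⟨C + D, fun n => le_trans (abs_add_le _ _) (add_le_add (hC n) (hD n))⟩

lemma state_mono (S : LinfState) {x y : ℕ → ℝ} (hx : Bdd x) (hy : Bdd y)
    (h : ∀ n, x n ≤ y n) : S.toFun x ≤ S.toFun y := by
  have hyx : Bdd (y - x) := bdd_sub hy hx
  have h1 : y = x + (y - x) := by funext n; simp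
  have h2 : S.toFun y = S.toFun x + S.toFun (y - x) := by
    conv_lhs => rw [h1]
    exact S.map_add' x (y - x) hx hyx
  have h3 : 0 ≤ S.toFun (y - x) := S.pos' _ hyx (fun n => by simp [h n])
  linarith

lemma state_zero (S : LinfState) : S.toFun 0 = 0 := by
  have := S.map_smul' 0 0 ⟨0, fun n => by simp⟩
  simpa using this

/-- If `z ∈ ℓ∞` is nonnegative with `ω(z) = 0` and `u` is a nonnegative
(possibly unbounded) sequence with `ω̄(u) < ∞`, then `ω̄(uz) = 0`, where `uz`
is the pointwise product. -/
theorem extension_mul_null (S : LinfState) (z u : ℕ → ℝ)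
    (hzB : Bdd z) (hz0 : ∀ n, 0 ≤ z n) (hωz : S.toFun z = 0)
    (hu0 : ∀ n, 0 ≤ u n) (huf : S.ext u < ⊤) :
    S.ext (fun n => u n * z n) = 0 := by
  obtain ⟨C0, hC0⟩ := hzB
  set C := max C0 1 with hCdef
  have hC1 : (1 : ℝ) ≤ C := le_max_right _ _
  have hCpos : (0 : ℝ) < C := lt_of_lt_of_le one_pos hC1
  have hzC : ∀ n, z n ≤ C := fun n =>
    le_trans (le_abs_self _) (le_trans (hC0 n) (le_max_left _ _))
  set T := (S.ext u).toReal with hT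
  -- truncations approach the sup
  have hkey : ∀ ε : ℝ, 0 < ε → ∃ N : ℝ, 0 ≤ N ∧
      T - ε < S.toFun (fun n => min (u n) N) := by
    intro ε hε
    by_contra hcon
    push_neg at hcon
    have hle : ∀ y' ∈ {y : ℕ → ℝ | Bdd y ∧ (∀ n, 0 ≤ y n) ∧ ∀ n, y n ≤ u n},
        S.toFun y' ≤ T - ε := by
      rintro y' ⟨⟨M0, hM0⟩, hy'0, hy'le⟩
      set N := max M0 0 with hN
      have hN0 : (0 : ℝ) ≤ N := le_max_right _ _
      have h1 : ∀ n, y' n ≤ min (u n) N := fun n =>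
        le_min (hy'le n) (le_trans (le_abs_self _) (le_trans (hM0 n) (le_max_left _ _)))
      have hbm : Bdd (fun n => min (u n) N) :=
        bdd_of_bounds (fun n => le_min (hu0 n) hN0) (fun n => min_le_right _ _)
      have := state_mono S ⟨M0, hM0⟩ hbm h1
      have := hcon N hN0
      linarith
    have hz' : (fun _ : ℕ => (0:ℝ)) ∈ {y : ℕ → ℝ | Bdd y ∧ (∀ n, 0 ≤ y n) ∧ ∀ n, y n ≤ u n} :=
      ⟨⟨0, fun n => by simp⟩, fun n => le_refl _, fun n => hu0 n⟩
    have h0 : (0:ℝ) ≤ T - ε := by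
      have := hle _ hz'
      have hz0' : S.toFun (fun _ => (0:ℝ)) = 0 := state_zero S
      linarith
    have hTpos : 0 < T := by linarith
    have hsup : S.ext u ≤ ENNReal.ofReal (T - ε) := by
      rw [LinfState.ext]
      exact iSup₂_le fun y' hy' => ENNReal.ofReal_le_ofReal (hle y' hy')
    have heq : ENNReal.ofReal T = S.ext u := ENNReal.ofReal_toReal huf.ne
    have : S.ext u < S.ext u := by
      calc S.ext u ≤ ENNReal.ofReal (T - ε) := hsup
      _ < ENNReal.ofReal T := by
          rw [ENNReal.ofReal_lt_ofReal_iff hTpos]; linarith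
      _ = S.ext u := heq
    exact lt_irrefl _ this
  -- main: each element of the sup is 0
  refine le_antisymm ?_ zero_le
  rw [LinfState.ext]
  refine iSup₂_le ?_
  rintro y ⟨⟨B0, hB0⟩, hy0, hyle⟩
  set B := max B0 0 with hBdef
  have hB0' : (0:ℝ) ≤ B := le_max_right _ _
  have hyB : ∀ n, y n ≤ B := fun n =>
    le_trans (le_abs_self _) (le_trans (hB0 n) (le_max_left _ _))
  have hyBdd : Bdd y := ⟨B0, hB0⟩
  suffices h : S.toFun y ≤ 0 by
    simp [ENNReal.ofReal_eq_zero.2 h]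
  -- show S.toFun y ≤ δ for all δ > 0
  refine le_of_forall_pos_le_add ?_
  intro δ hδ
  have hε : 0 < δ / C := div_pos hδ hCpos
  obtain ⟨N, hN0, hNlt⟩ := hkey (δ / C) hε
  -- pieces
  set m : ℕ → ℝ := fun n => min (y n) (N * z n) with hm
  set s : ℕ → ℝ := fun n => min (max (u n - N) 0) (B / C) with hs
  have hs0 : ∀ n, 0 ≤ s n := fun n =>
    le_min (le_max_right _ _) (div_nonneg hB0' hCpos.le)
  have hsB : ∀ n, s n ≤ B / C := fun n => min_le_right _ _
  have hsBdd : Bdd s := bdd_of_bounds hs0 hsB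
  have hm0 : ∀ n, 0 ≤ m n := fun n => le_min (hy0 n) (mul_nonneg hN0 (hz0 n))
  have hmB : ∀ n, m n ≤ B := fun n => le_trans (min_le_left _ _) (hyB n)
  have hmBdd : Bdd m := bdd_of_bounds hm0 hmB
  -- key pointwise bound : y ≤ m + C • s
  have hpt : ∀ n, y n ≤ m n + C * s n := by
    intro n
    rcases le_total (y n) (N * z n) with h | h
    · have : m n = y n := min_eq_left h
      have := mul_nonneg hCpos.le (hs0 n)
      simp only [hm]
      rw [min_eq_left h]
      linarith
    · have hmn : m n = N * z n := min_eq_right h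
      have hgoal : y n - N * z n ≤ C * s n := by
        have h1 : y n - N * z n ≤ C * (B / C) := by
          rw [mul_div_cancel₀ _ hCpos.ne']
          have := mul_nonneg hN0 (hz0 n)
          linarith [hyB n]
        have h2 : y n - N * z n ≤ C * max (u n - N) 0 := by
          rcases le_total (u n) N with hun | hun
          · have : u n * z n ≤ N * z n := mul_le_mul_of_nonneg_right hun (hz0 n)
            have h3 : (0:ℝ) ≤ C * max (u n - N) 0 :=
              mul_nonneg hCpos.le (le_max_right _ _)
            linarith [hyle n]
          · have h4 : u n * z n - N * z n = (u n - N) * z n := by ring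
            have h5 : (u n - N) * z n ≤ (u n - N) * C :=
              mul_le_mul_of_nonneg_left (hzC n) (by linarith)
            have h6 : max (u n - N) 0 = u n - N := max_eq_left (by linarith)
            have := hyle n
            rw [h6]; nlinarith
        have : C * s n = min (C * max (u n - N) 0) (C * (B / C)) := by
          rw [hs]; dsimp only
          exact mul_min_of_nonneg _ _ hCpos.le
        rw [this]
        exact le_min h2 h1
      rw [hmn] at *
      linarith
  -- ω s < δ / C
  have hwmem : (fun n => min (u n) N + s n) ∈
      {y : ℕ → ℝ | Bdd y ∧ (∀ n, 0 ≤ y n) ∧ ∀ n, y n ≤ u n} := by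
    refine ⟨bdd_add (bdd_of_bounds (fun n => le_min (hu0 n) hN0) (fun n => min_le_right _ _)) hsBdd,
      fun n => add_nonneg (le_min (hu0 n) hN0) (hs0 n), fun n => ?_⟩
    show min (u n) N + s n ≤ u n
    rcases le_total (u n) N with h | h
    · have h1 : min (u n) N = u n := min_eq_left h
      have h2 : max (u n - N) 0 = 0 := max_eq_right (by linarith)
      have h3 : s n = 0 := by
        rw [hs]; simp only [h2]
        exact min_eq_left (div_nonneg hB0' hCpos.le)
      rw [h1, h3]; simp
    · have h1 : min (u n) N = N := min_eq_right h
      have h2 : s n ≤ u n - N := le_trans (min_le_left _ _) (by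
        rw [max_eq_left (by linarith)])
      rw [h1]; linarith
  have hwle : ENNReal.ofReal (S.toFun (fun n => min (u n) N + s n)) ≤ S.ext u := by
    rw [LinfState.ext]
    exact le_iSup₂ (f := fun y _ => ENNReal.ofReal (S.toFun y)) _ hwmem
  have hwadd : S.toFun (fun n => min (u n) N + s n)
      = S.toFun (fun n => min (u n) N) + S.toFun s := by
    have := S.map_add' (fun n => min (u n) N) s
      (bdd_of_bounds (fun n => le_min (hu0 n) hN0) (fun n => min_le_right _ _)) hsBdd
    simpa [Pi.add_def] using this
  have hwT : S.toFun (fun n => min (u n) N + s n) ≤ T := by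
    have hne : S.ext u ≠ ⊤ := huf.ne
    have := hwle
    rw [ENNReal.ofReal_le_iff_le_toReal hne] at this
    exact this
  have hsε : S.toFun s < δ / C := by
    rw [hwadd] at hwT
    linarith
  -- conclude
  have hmle : S.toFun m ≤ 0 := by
    have hNz : Bdd (N • z) := bdd_smul N ⟨C0, hC0⟩
    have h1 : S.toFun m ≤ S.toFun (N • z) :=
      state_mono S hmBdd hNz (fun n => by
        simpa [hm, Pi.smul_apply, smul_eq_mul] using min_le_right (y n) (N * z n))
    have h2 : S.toFun (N • z) = N * S.toFun z := S.map_smul' N z ⟨C0, hC0⟩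
    rw [h2, hωz] at h1
    simpa using h1
  have hyfin : S.toFun y ≤ S.toFun (m + C • s) :=
    state_mono S hyBdd (bdd_add hmBdd (bdd_smul C hsBdd))
      (fun n => by simpa [Pi.add_apply, Pi.smul_apply, smul_eq_mul] using hpt n)
  have hsplit : S.toFun (m + C • s) = S.toFun m + C * S.toFun s := by
    rw [S.map_add' m (C • s) hmBdd (bdd_smul C hsBdd), S.map_smul' C s hsBdd]
  have : C * S.toFun s ≤ δ := by
    have := mul_le_mul_of_nonneg_left hsε.le hCpos.le
    rwa [mul_div_cancel₀ _ hCpos.ne'] at this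
  linarith [hyfin, hsplit, hmle]
end

section
/- Let ω be a singular dilation-invariant state on ℓ∞ and let ψ : ℕ → (0,∞) be increasing, concave (in the sense that the increments ψ(n+1)−ψ(n) are nonincreasing), unbounded, and satisfy ω({ψ(2n+1)/ψ(n+1)}) = 1. For a nonincreasing nonnegative sequence c, the sequences {(1/ψ(n+1)) ∑_{k=0}^{n} c(k)}_{n≥0} ∘ σ₂-shift satisfy: σ₂({(1/ψ(2n+1)) ∑_{k=0}^{2n+1} c(k)}_{n≥0}) − {(1/ψ(n+1)) ∑_{k=0}^{n} c(k)}_{n≥0} ∈ c₀, provided sup_n (1/ψ(n+1)) ∑_{k=0}^{n} c(k) < ∞. -/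
open Filter
open scoped ENNReal

/-- Key asymptotic identity: for a nonincreasing nonnegative sequence `c` with
bounded `ψ`-Cesàro means, the dilation `σ₂` of the means
`n ↦ (1/ψ(2n+1)) ∑_{k=0}^{2n+1} c(k)` differs from the means
`n ↦ (1/ψ(n+1)) ∑_{k=0}^{n} c(k)` by a null sequence (an element of `c₀`).
Here `ψ : ℕ → (0,∞)` is increasing, concave (nonincreasing increments) and
unbounded, and `ω` is a singular dilation-invariant state with
`ω({ψ(2n+1)/ψ(n+1)}) = 1`. -/
theorem dilated_means_sub_means_null (S : LinfState)
    (hsing : ∀ x : ℕ → ℝ, Bdd x → Tendsto x atTop (nhds 0) → S.toFun x = 0)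
    (hdilinv : ∀ n : ℕ, 1 ≤ n → ∀ x : ℕ → ℝ, Bdd x →
      S.toFun (fun k => x (k / n)) = S.toFun x)
    (ψ : ℕ → ℝ) (hpos : ∀ n : ℕ, 1 ≤ n → 0 < ψ n)
    (hincr : Monotone ψ)
    (hconc : Antitone (fun n => ψ (n + 1) - ψ n))
    (htop : Tendsto ψ atTop atTop)
    (hω1 : S.toFun (fun n => ψ (2 * n + 1) / ψ (n + 1)) = 1)
    (c : ℕ → ℝ) (hc : Antitone c) (hc0 : ∀ k, 0 ≤ c k)
    (hbdd : ∃ M : ℝ, ∀ n, (∑ k ∈ Finset.range (n + 1), c k) ≤ M * ψ (n + 1)) :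
    Tendsto (fun m : ℕ =>
        (∑ k ∈ Finset.range (2 * (m / 2) + 2), c k) / ψ (2 * (m / 2) + 1) -
          (∑ k ∈ Finset.range (m + 1), c k) / ψ (m + 1))
      atTop (nhds 0) := by

  obtain ⟨M, hM⟩ := hbdd
  have hD0 : (0:ℝ) ≤ ψ 1 - ψ 0 := sub_nonneg.2 (hincr (by norm_num))
  set K : ℝ := c 0 + |M| * (ψ 1 - ψ 0) with hKdef
  have hK0 : 0 ≤ K := add_nonneg (hc0 0) (mul_nonneg (abs_nonneg M) hD0)
  have hlim : Tendsto (fun m : ℕ => K / ψ m) atTop (nhds 0) :=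
    tendsto_const_nhds.div_atTop htop
  have key : ∀ m : ℕ, 1 ≤ m →
      0 ≤ (∑ k ∈ Finset.range (2 * (m / 2) + 2), c k) / ψ (2 * (m / 2) + 1) -
          (∑ k ∈ Finset.range (m + 1), c k) / ψ (m + 1) ∧
      (∑ k ∈ Finset.range (2 * (m / 2) + 2), c k) / ψ (2 * (m / 2) + 1) -
          (∑ k ∈ Finset.range (m + 1), c k) / ψ (m + 1) ≤ K / ψ m := by
    intro m hm
    rcases Nat.even_or_odd' m with ⟨t, rfl | rfl⟩
    · -- even case: m = 2*t
      have ht : 1 ≤ t := by omega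
      have hdiv : 2 * t / 2 = t := by omega
      rw [hdiv]
      have hsum : ∑ k ∈ Finset.range (2 * t + 2), c k
          = (∑ k ∈ Finset.range (2 * t + 1), c k) + c (2 * t + 1) := by
        have := Finset.sum_range_succ c (2 * t + 1)
        simpa [show 2 * t + 1 + 1 = 2 * t + 2 from by ring] using this
      rw [hsum, add_div, add_sub_cancel_left]
      have ha : 0 < ψ (2 * t + 1) := hpos _ (by omega)
      have hmpos : 0 < ψ (2 * t) := hpos _ (by omega)
      constructor
      · exact div_nonneg (hc0 _) ha.le
      · have hcK : c (2 * t + 1) ≤ K := by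
          have := hc (Nat.zero_le (2 * t + 1))
          have h2 : (0:ℝ) ≤ |M| * (ψ 1 - ψ 0) := mul_nonneg (abs_nonneg M) hD0
          linarith
        exact div_le_div₀ hK0 hcK hmpos (hincr (by omega))
    · -- odd case: m = 2*t+1
      have hdiv : (2 * t + 1) / 2 = t := by omega
      rw [hdiv]
      have heq : 2 * t + 1 + 1 = 2 * t + 2 := by ring
      rw [heq]
      set A : ℝ := ∑ k ∈ Finset.range (2 * t + 2), c k with hAdef
      have hA0 : 0 ≤ A := Finset.sum_nonneg fun k _ => hc0 k
      have ha : 0 < ψ (2 * t + 1) := hpos _ (by omega)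
      have hb : 0 < ψ (2 * t + 2) := hpos _ (by omega)
      have hab : ψ (2 * t + 1) ≤ ψ (2 * t + 2) := hincr (by omega)
      have hAb : A ≤ |M| * ψ (2 * t + 2) := by
        have := hM (2 * t + 1)
        have h2 : M * ψ (2 * t + 1 + 1) ≤ |M| * ψ (2 * t + 1 + 1) :=
          mul_le_mul_of_nonneg_right (le_abs_self M) (hpos _ (by omega)).le
        rw [heq] at this h2
        exact le_trans this h2
      have hba : ψ (2 * t + 2) - ψ (2 * t + 1) ≤ ψ 1 - ψ 0 := by
        have := hconc (Nat.zero_le (2 * t + 1))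
        simpa [show 2 * t + 1 + 1 = 2 * t + 2 from by ring] using this
      constructor
      · exact sub_nonneg.2 (div_le_div₀ hA0 le_rfl ha hab)
      · rw [div_sub_div _ _ ha.ne' hb.ne', div_le_div_iff₀ (mul_pos ha hb) ha, hKdef]
        nlinarith [mul_nonneg (abs_nonneg M) hD0, mul_pos ha hb,
          mul_nonneg hA0 ha.le, mul_nonneg (mul_nonneg (hc0 0) ha.le) hb.le,
          mul_nonneg (mul_nonneg (mul_nonneg (abs_nonneg M) hD0) ha.le) hb.le,
          mul_le_mul_of_nonneg_right hAb (mul_nonneg (sub_nonneg.2 hab) ha.le),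
          mul_le_mul_of_nonneg_right hba (mul_nonneg (mul_nonneg (abs_nonneg M) hb.le) ha.le)]
  refine squeeze_zero' ?_ ?_ hlim
  · filter_upwards [eventually_ge_atTop 1] with m hm using (key m hm).1
  · filter_upwards [eventually_ge_atTop 1] with m hm using (key m hm).2
end

section
/- Let E be a fully symmetric ideal of nonincreasing-rearrangement-closed sequences in c₀, with a fully symmetric positive trace φ (φ(b) ≤ φ(a) whenever 0 ≤ b ≺≺ a). Suppose φ is relatively normal with respect to a Marcinkiewicz ideal m_ψ ⊆ E, meaning φ(a) = sup{φ(b) : b ∈ m_ψ, 0 ≤ b ≺≺ a} for all nonincreasing 0 ≤ a ∈ E, where m_ψ = {b : sup_n (1/ψ(n+1)) ∑_{k=0}^{n} μ(k,b) < ∞}. Let w be the nonincreasing sequence w(n) = ψ(n+1) − ψ(n) (ψ(0)=0), so w ∈ m_ψ. Then for every nonincreasing 0 ≤ a ∈ E, φ(a) = lim_{m→∞} φ(a ∧ m·w), where a ∧ m·w denotes any nonincreasing nonnegative sequence whose partial sums equal min{∑_{k=0}^{n} a(k), m·ψ(n+1)} for every n. -/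
open Filter

/-- Partial sums of a sequence: `P a n = ∑_{k=0}^{n} a(k)`. -/
def P (a : ℕ → ℝ) (n : ℕ) : ℝ := ∑ k ∈ Finset.range (n + 1), a k

/-- If `φ` is a fully symmetric positive functional on a fully symmetric
sequence ideal `E` which is relatively normal with respect to the Marcinkiewicz
ideal `m_ψ ⊆ E` (with weight increments `w(n) = ψ(n+1) − ψ(n)`, `ψ(0) = 0`),
then for every nonincreasing nonnegative `a ∈ E`,
`φ(a) = lim_{m→∞} φ(a ∧ m·w)`, where `a ∧ m·w` is any nonincreasing
nonnegative sequence whose partial sums are `min{∑_{k≤n} a(k), m·ψ(n+1)}`. -/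
theorem relatively_normal_lim (E : Set (ℕ → ℝ)) (φ : (ℕ → ℝ) → ℝ)
    (ψ : ℕ → ℝ) (hψ0 : ψ 0 = 0) (hψpos : ∀ n : ℕ, 1 ≤ n → 0 < ψ n)
    (hψmono : Monotone ψ) (hψconc : Antitone (fun n => ψ (n + 1) - ψ n))
    -- `E` is fully symmetric: closed under Hardy–Littlewood submajorization
    (hEsub : ∀ a ∈ E, Antitone a → (∀ k, 0 ≤ a k) →
      ∀ b : ℕ → ℝ, Antitone b → (∀ k, 0 ≤ b k) →
        (∀ n, P b n ≤ P a n) → b ∈ E)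
    -- the Marcinkiewicz ideal `m_ψ` is contained in `E`
    (hMψE : ∀ b : ℕ → ℝ, Antitone b → (∀ k, 0 ≤ b k) →
      (∃ M : ℝ, ∀ n, P b n ≤ M * ψ (n + 1)) → b ∈ E)
    -- `φ` is fully symmetric (positive and monotone for submajorization)
    (hφ : ∀ a ∈ E, ∀ b ∈ E, Antitone a → (∀ k, 0 ≤ a k) →
      Antitone b → (∀ k, 0 ≤ b k) → (∀ n, P b n ≤ P a n) → φ b ≤ φ a)
    -- `φ` is relatively normal with respect to `m_ψ`
    (hnorm : ∀ a ∈ E, Antitone a → (∀ k, 0 ≤ a k) →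
      φ a = sSup {r : ℝ | ∃ b : ℕ → ℝ, Antitone b ∧ (∀ k, 0 ≤ b k) ∧
        (∃ M : ℝ, ∀ n, P b n ≤ M * ψ (n + 1)) ∧
        (∀ n, P b n ≤ P a n) ∧ r = φ b})
    (a : ℕ → ℝ) (haE : a ∈ E) (ha : Antitone a) (ha0 : ∀ k, 0 ≤ a k)
    (g : ℕ → ℕ → ℝ)
    (hg : ∀ m : ℕ, Antitone (g m) ∧ (∀ k, 0 ≤ g m k) ∧
      ∀ n, P (g m) n = min (P a n) ((m : ℝ) * ψ (n + 1))) :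
    Tendsto (fun m : ℕ => φ (g m)) atTop (nhds (φ a)) := by
  -- basic facts about g m
  have hgPa : ∀ m n, P (g m) n ≤ P a n := by
    intro m n
    rw [(hg m).2.2 n]; exact min_le_left _ _
  have hgE : ∀ m, g m ∈ E := fun m =>
    hEsub a haE ha ha0 (g m) (hg m).1 (hg m).2.1 (hgPa m)
  have hgle : ∀ m, φ (g m) ≤ φ a := fun m =>
    hφ a haE (g m) (hgE m) ha ha0 (hg m).1 (hg m).2.1 (hgPa m)
  have hmono : Monotone (fun m : ℕ => φ (g m)) := by
    intro m m' hmm'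
    refine hφ (g m') (hgE m') (g m) (hgE m) (hg m').1 (hg m').2.1 (hg m).1 (hg m).2.1 ?_
    intro n
    rw [(hg m).2.2 n, (hg m').2.2 n]
    refine min_le_min le_rfl ?_
    have : (0:ℝ) ≤ ψ (n+1) := (hψpos (n+1) (Nat.le_add_left 1 n)).le
    exact mul_le_mul_of_nonneg_right (by exact_mod_cast hmm') this
  have hbdd : BddAbove (Set.range fun m : ℕ => φ (g m)) := by
    refine ⟨φ a, ?_⟩
    rintro r ⟨m, rfl⟩
    exact hgle m
  have htend : Tendsto (fun m : ℕ => φ (g m)) atTop (nhds (⨆ m, φ (g m))) :=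
    tendsto_atTop_ciSup hmono hbdd
  have hsup : (⨆ m, φ (g m)) = φ a := by
    apply le_antisymm
    · exact ciSup_le hgle
    · rw [hnorm a haE ha ha0]
      have hP0 : ∀ n, P (fun _ : ℕ => (0:ℝ)) n = 0 := by
        intro n; simp [P]
      have hne : {r : ℝ | ∃ b : ℕ → ℝ, Antitone b ∧ (∀ k, 0 ≤ b k) ∧
          (∃ M : ℝ, ∀ n, P b n ≤ M * ψ (n + 1)) ∧
          (∀ n, P b n ≤ P a n) ∧ r = φ b}.Nonempty := by
        refine ⟨φ (fun _ => 0), fun _ => 0, antitone_const, fun _ => le_rfl,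
          ⟨0, fun n => ?_⟩, fun n => ?_, rfl⟩
        · rw [hP0 n]; simp
        · rw [hP0 n]
          exact Finset.sum_nonneg fun k _ => ha0 k
      apply csSup_le hne
      · rintro r ⟨b, hbanti, hb0, ⟨M, hM⟩, hbPa, rfl⟩
        have hbE : b ∈ E := hMψE b hbanti hb0 ⟨M, hM⟩
        set m : ℕ := ⌈M⌉₊ with hm
        have hble : ∀ n, P b n ≤ P (g m) n := by
          intro n
          rw [(hg m).2.2 n]
          refine le_min (hbPa n) ((hM n).trans ?_)
          have hψn : (0:ℝ) ≤ ψ (n+1) := (hψpos (n+1) (Nat.le_add_left 1 n)).le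
          exact mul_le_mul_of_nonneg_right (Nat.le_ceil M) hψn
        have : φ b ≤ φ (g m) :=
          hφ (g m) (hgE m) b hbE (hg m).1 (hg m).2.1 hbanti hb0 hble
        exact this.trans (le_ciSup hbdd m)
  rwa [hsup] at htend
end
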